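/- Suppose lim_n K(y_1^n)/n = 0, lim_n (1/n)Σ_{i=1}^n y_i = 1, and lim_n K(x_1^n)/n = 1. Then lim_n K(x_1^n/y_1^n | y_1^n)/n₁ = 1, where n₁ = Σ_{i=1}^n y_i. -/

import Mathlib

open Filter

/-- The first `n` bits `y_1^n` of an infinite sequence `y`. -/
def pref (y : ℕ → Bool) (n : ℕ) : List Bool := List.ofFn (fun i : Fin n => y i)

/-- Subsequence of the string `x` at the positions where `y` is `true`. -/
def selT (x y : List Bool) : List Bool :=
  ((x.zip y).filter (fun p => p.2)).map Prod.fst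

/-- Subsequence of the string `x` at the positions where `y` is `false`. -/
def selF (x y : List Bool) : List Bool :=
  ((x.zip y).filter (fun p => !p.2)).map Prod.fst

lemma pref_length (y : ℕ → Bool) (n : ℕ) : (pref y n).length = n := by simp [pref]

lemma count_true_add_count_false (l : List Bool) :
    l.count true + l.count false = l.length := by
  induction l with
  | nil => rfl
  | cons a l ih => cases a <;> simp [List.count_cons] <;> omega

lemma sel_lengths : ∀ (x y : List Bool), x.length = y.length →
    (selT x y).length = y.count true ∧ (selF x y).length = y.count false := by
  intro x
  induction x with
  | nil =>
    intro y h
    cases y with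
    | nil => simp [selT, selF]
    | cons b y => simp at h
  | cons a x ih =>
    intro y h
    cases y with
    | nil => simp at h
    | cons b y =>
      have h' := ih y (by simpa using h)
      cases b <;> simp [selT, selF, List.count_cons] at h' ⊢ <;> omega

lemma aux_log_tendsto : Tendsto (fun n : ℕ => Real.logb 2 ((n:ℝ)+2) / n) atTop (nhds 0) := by
  have hcast : Tendsto (fun n : ℕ => (n:ℝ)) atTop atTop := tendsto_natCast_atTop_atTop
  have hinv : Tendsto (fun n : ℕ => 1/(n:ℝ)) atTop (nhds 0) :=
    tendsto_one_div_atTop_nhds_zero_nat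
  have h0 : Tendsto (fun t : ℝ => Real.log t / t) atTop (nhds 0) := by
    simpa using Real.isLittleO_log_id_atTop.tendsto_div_nhds_zero
  have h1 : Tendsto (fun n : ℕ => (n:ℝ)+2) atTop atTop :=
    tendsto_atTop_add_const_right _ 2 hcast
  have h2 : Tendsto (fun n : ℕ => Real.log ((n:ℝ)+2) / ((n:ℝ)+2)) atTop (nhds 0) := h0.comp h1
  have h3 : Tendsto (fun n : ℕ => ((n:ℝ)+2)/n) atTop (nhds 1) := by
    have h4 := (tendsto_const_nhds (x := (1:ℝ)) (f := atTop (α := ℕ))).add (hinv.const_mul (2:ℝ))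
    rw [mul_zero, add_zero] at h4
    refine h4.congr' ?_
    filter_upwards [eventually_ge_atTop 1] with n hn
    have hn' : (n:ℝ) ≠ 0 := Nat.cast_ne_zero.mpr (by omega)
    field_simp
  have hlog2 : Real.log 2 ≠ 0 := ne_of_gt (Real.log_pos (by norm_num))
  have h5 := (h2.mul h3).mul_const (1/Real.log 2)
  rw [zero_mul, zero_mul] at h5
  refine h5.congr' ?_
  filter_upwards [eventually_ge_atTop 1] with n hn
  have hn' : (n:ℝ) ≠ 0 := Nat.cast_ne_zero.mpr (by omega)
  have hn2 : (n:ℝ)+2 ≠ 0 := by positivity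
  rw [Real.logb]
  field_simp

/-- Proposition 2, (i) ⇒ (ii), boundary case of selection density `1`.
The standard prefix-complexity facts are taken as hypotheses, as in the
density `d ∈ (0,1)` case. -/
theorem selected_complexity_rate_one_of_zero_rate_selector_density_one
    (K : List Bool → ℕ) (CK : List Bool → List Bool → ℕ)
    (K2 : List Bool × List Bool → List Bool → ℕ)
    (F1 : ∃ c : ℕ, ∀ u w : List Bool,
      (K u : ℤ) - CK u w ≤ K w + c ∧ (CK u w : ℤ) - K u ≤ K w + c)
    (F2 : ∃ c : ℕ, ∀ u w : List Bool, u.length = w.length →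
      (CK u w : ℤ) - K2 (selT u w, selF u w) w ≤ c ∧
      (K2 (selT u w, selF u w) w : ℤ) - CK u w ≤ c)
    (F3 : ∃ c : ℕ, ∀ u v w : List Bool,
      (K2 (u, v) w : ℝ) ≤ CK u w + CK v w
        + c * Real.logb 2 (u.length + v.length + 2) + c)
    (F4 : ∃ c : ℕ, ∀ u w : List Bool,
      (CK u w : ℝ) ≤ u.length + c * Real.logb 2 (u.length + 2) + c)
    (x y : ℕ → Bool)
    (hdens : Tendsto (fun n => ((pref y n).count true : ℝ) / n) atTop (nhds 1))
    (hy : Tendsto (fun n => (K (pref y n) : ℝ) / n) atTop (nhds 0))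
    (hx : Tendsto (fun n => (K (pref x n) : ℝ) / n) atTop (nhds 1)) :
    Tendsto (fun n => (CK (selT (pref x n) (pref y n)) (pref y n) : ℝ)
        / ((pref y n).count true : ℝ)) atTop (nhds 1) := by
  obtain ⟨c1, h1⟩ := F1
  obtain ⟨c2, h2⟩ := F2
  obtain ⟨c3, h3⟩ := F3
  obtain ⟨c4, h4⟩ := F4
  set f : ℕ → ℝ := fun n => (CK (selT (pref x n) (pref y n)) (pref y n) : ℝ) with hf
  set T : ℕ → ℝ := fun n => ((pref y n).count true : ℝ) with hTdef
  have hinv : Tendsto (fun n : ℕ => 1/(n:ℝ)) atTop (nhds 0) :=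
    tendsto_one_div_atTop_nhds_zero_nat
  have hlog := aux_log_tendsto
  -- T n ≤ n
  have hTle : ∀ n : ℕ, (pref y n).count true ≤ n := fun n => by
    simpa [pref_length] using List.count_le_length (a := true) (l := pref y n)
  -- (n - T n)/n → 0
  have hdT : Tendsto (fun n : ℕ => ((n:ℝ) - T n)/n) atTop (nhds 0) := by
    have h := (tendsto_const_nhds (x := (1:ℝ)) (f := atTop (α := ℕ))).sub hdens
    rw [sub_self] at h
    refine h.congr' ?_
    filter_upwards [eventually_ge_atTop 1] with n hn
    have hn' : (n:ℝ) ≠ 0 := Nat.cast_ne_zero.mpr (by omega)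
    field_simp
    rfl
  -- upper bound sequence
  have hU : Tendsto (fun n : ℕ => T n/n + (c4:ℝ) * (Real.logb 2 ((n:ℝ)+2)/n) + (c4:ℝ)*(1/n))
      atTop (nhds 1) := by
    have := (hdens.add (hlog.const_mul (c4:ℝ))).add (hinv.const_mul (c4:ℝ))
    simpa using this
  -- lower bound sequence
  have hL : Tendsto (fun n : ℕ => (K (pref x n) : ℝ)/n - (K (pref y n) : ℝ)/n
      - ((n:ℝ) - T n)/n - ((c3:ℝ)+(c4:ℝ)) * (Real.logb 2 ((n:ℝ)+2)/n)
      - ((c1+c2+c3+c4 : ℕ):ℝ)*(1/n)) atTop (nhds 1) := by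
    have := (((hx.sub hy).sub hdT).sub (hlog.const_mul ((c3:ℝ)+(c4:ℝ)))).sub
      (hinv.const_mul ((c1+c2+c3+c4 : ℕ):ℝ))
    simpa using this
  -- pointwise bounds
  have hub : ∀ᶠ n : ℕ in atTop, f n / n ≤ T n/n + (c4:ℝ) * (Real.logb 2 ((n:ℝ)+2)/n) + (c4:ℝ)*(1/n) := by
    filter_upwards [eventually_ge_atTop 1] with n hn
    have hn0 : (0:ℝ) < n := by exact_mod_cast hn
    have hlen : (pref x n).length = (pref y n).length := by simp [pref_length]
    obtain ⟨hsT, hsF⟩ := sel_lengths (pref x n) (pref y n) hlen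
    have key : f n ≤ T n + (c4:ℝ) * Real.logb 2 ((n:ℝ)+2) + (c4:ℝ) := by
      have h4' := h4 (selT (pref x n) (pref y n)) (pref y n)
      rw [hsT] at h4'
      have hmono : Real.logb 2 ((((pref y n).count true : ℕ):ℝ)+2) ≤ Real.logb 2 ((n:ℝ)+2) := by
        apply Real.logb_le_logb_of_le (by norm_num) (by positivity)
        have := hTle n
        have hle2 : ((pref y n).count true : ℝ) ≤ (n:ℝ) := Nat.cast_le.mpr this
        linarith
      have hc4 : (0:ℝ) ≤ (c4:ℝ) := Nat.cast_nonneg _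
      calc f n ≤ (((pref y n).count true : ℕ):ℝ) + (c4:ℝ) * Real.logb 2 ((((pref y n).count true : ℕ):ℝ)+2) + (c4:ℝ) := by
            exact_mod_cast h4'
        _ ≤ T n + (c4:ℝ) * Real.logb 2 ((n:ℝ)+2) + (c4:ℝ) := by
            simp only [hTdef]
            nlinarith
    calc f n / n ≤ (T n + (c4:ℝ) * Real.logb 2 ((n:ℝ)+2) + (c4:ℝ)) / n := by
          exact div_le_div_of_nonneg_right key (le_of_lt hn0) |>.trans_eq rfl
      _ = T n/n + (c4:ℝ) * (Real.logb 2 ((n:ℝ)+2)/n) + (c4:ℝ)*(1/n) := by ring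
  have hlb : ∀ᶠ n : ℕ in atTop, (K (pref x n) : ℝ)/n - (K (pref y n) : ℝ)/n
      - ((n:ℝ) - T n)/n - ((c3:ℝ)+(c4:ℝ)) * (Real.logb 2 ((n:ℝ)+2)/n)
      - ((c1+c2+c3+c4 : ℕ):ℝ)*(1/n) ≤ f n / n := by
    filter_upwards [eventually_ge_atTop 1] with n hn
    have hn0 : (0:ℝ) < n := by exact_mod_cast hn
    have hlen : (pref x n).length = (pref y n).length := by simp [pref_length]
    obtain ⟨hsT, hsF⟩ := sel_lengths (pref x n) (pref y n) hlen
    set u := pref x n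
    set w := pref y n
    set sT := selT u w
    set sF := selF u w
    have hcadd : w.count true + w.count false = n := by
      rw [count_true_add_count_false, pref_length]
    have hFlen : ((sF.length : ℕ):ℝ) = (n:ℝ) - T n := by
      rw [hsF, hTdef]
      have h5 : w.count false = n - w.count true := by omega
      rw [h5, Nat.cast_sub (hTle n)]
    have hTlen : ((sT.length : ℕ):ℝ) = T n := by rw [hsT]
    have a1 : (K u:ℝ) ≤ (CK u w:ℝ) + (K w:ℝ) + (c1:ℝ) := by
      have := (h1 u w).1
      have h6 : (K u:ℤ) ≤ (CK u w:ℤ) + (K w:ℤ) + (c1:ℤ) := by linarith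
      exact_mod_cast h6
    have a2 : (CK u w:ℝ) ≤ (K2 (sT, sF) w:ℝ) + (c2:ℝ) := by
      have := (h2 u w hlen).1
      have h6 : (CK u w:ℤ) ≤ (K2 (sT, sF) w:ℤ) + (c2:ℤ) := by linarith
      exact_mod_cast h6
    have a3 := h3 sT sF w
    have hsum : ((sT.length : ℕ):ℝ) + ((sF.length : ℕ):ℝ) + 2 = (n:ℝ)+2 := by
      rw [hTlen, hFlen]; ring
    rw [hsum] at a3
    have a4 := h4 sF w
    have hmono : Real.logb 2 (((sF.length : ℕ):ℝ)+2) ≤ Real.logb 2 ((n:ℝ)+2) := by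
      apply Real.logb_le_logb_of_le (by norm_num) (by positivity)
      have hTnn : (0:ℝ) ≤ T n := Nat.cast_nonneg _
      rw [hFlen]; linarith
    have hc4mono : (c4:ℝ) * Real.logb 2 (((sF.length : ℕ):ℝ)+2) ≤ (c4:ℝ) * Real.logb 2 ((n:ℝ)+2) :=
      mul_le_mul_of_nonneg_left hmono (Nat.cast_nonneg _)
    have hfn : f n = (CK sT w : ℝ) := rfl
    have key : (K u:ℝ) - (K w:ℝ) - ((n:ℝ) - T n) - ((c3:ℝ)+(c4:ℝ))*Real.logb 2 ((n:ℝ)+2)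
        - ((c1+c2+c3+c4 : ℕ):ℝ) ≤ f n := by
      rw [hfn]
      push_cast
      linarith [hFlen]
    calc (K u:ℝ)/n - (K w:ℝ)/n - ((n:ℝ) - T n)/n - ((c3:ℝ)+(c4:ℝ)) * (Real.logb 2 ((n:ℝ)+2)/n)
          - ((c1+c2+c3+c4 : ℕ):ℝ)*(1/n)
        = ((K u:ℝ) - (K w:ℝ) - ((n:ℝ) - T n) - ((c3:ℝ)+(c4:ℝ))*Real.logb 2 ((n:ℝ)+2)
          - ((c1+c2+c3+c4 : ℕ):ℝ))/n := by ring
      _ ≤ f n / n := div_le_div_of_nonneg_right key (le_of_lt hn0)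
  have hfn : Tendsto (fun n => f n / n) atTop (nhds 1) :=
    tendsto_of_tendsto_of_tendsto_of_le_of_le' hL hU hlb hub
  have hdiv := hfn.div hdens one_ne_zero
  rw [div_one] at hdiv
  refine hdiv.congr' ?_
  filter_upwards [eventually_ge_atTop 1] with n hn
  have hn' : (n:ℝ) ≠ 0 := Nat.cast_ne_zero.mpr (by omega)
  rcases eq_or_ne (T n) 0 with h|h
  · have h0 : ((pref y n).count true : ℝ) = 0 := h
    simp [h0]
  · have h0 : ((pref y n).count true : ℝ) ≠ 0 := h
    show f n / n / (_ / _) = _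
    field_simp
    rfl
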